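/- Let G, H, K be finite groups and R ≤ G × H, T ≤ H × K subgroups. Then |ker T ∩ indef R| · |indef TR| = |indef T| · |indef R ∩ dom T|, where for a relation S, ker S, indef S, dom S, im S are as usual and TR is the relational composition. -/

import Mathlib

private lemma aux_snd {H K : Type*} [Group H] [Group K] (U : Subgroup (H × K)) :
    Nat.card {h : H // (h, (1 : K)) ∈ U} * Nat.card {k : K // ∃ h : H, (h, k) ∈ U} =
      Nat.card U := by
  let f : U →* K := (MonoidHom.snd H K).comp U.subtype
  have h1 : Nat.card {h : H // (h, (1 : K)) ∈ U} = Nat.card f.ker := by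
    refine Nat.card_congr ⟨fun h => ⟨⟨(h.1, 1), h.2⟩, rfl⟩,
      fun x => ⟨((x.1 : H × K)).1, ?_⟩, fun h => rfl, fun x => ?_⟩
    · have hx := x.1.2
      rwa [show ((x.1 : H × K)) = (((x.1 : H × K)).1, (1 : K)) from Prod.ext rfl x.2] at hx
    · exact Subtype.ext (Subtype.ext (Prod.ext rfl x.2.symm))
  have h2 : Nat.card {k : K // ∃ h : H, (h, k) ∈ U} = Nat.card f.range := by
    refine Nat.card_congr (Equiv.subtypeEquivRight fun k => ?_)
    constructor
    · rintro ⟨h, hk⟩; exact ⟨⟨(h, k), hk⟩, rfl⟩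
    · rintro ⟨⟨⟨h, k'⟩, hm⟩, rfl⟩; exact ⟨h, hm⟩
  rw [h1, h2, ← Nat.card_congr (QuotientGroup.quotientKerEquivRange f).toEquiv, mul_comm]
  exact (Subgroup.card_eq_card_quotient_mul_card_subgroup f.ker).symm

private lemma aux_fst {H K : Type*} [Group H] [Group K] (U : Subgroup (H × K)) :
    Nat.card {k : K // ((1 : H), k) ∈ U} * Nat.card {h : H // ∃ k : K, (h, k) ∈ U} =
      Nat.card U := by
  let f : U →* H := (MonoidHom.fst H K).comp U.subtype
  have h1 : Nat.card {k : K // ((1 : H), k) ∈ U} = Nat.card f.ker := by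
    refine Nat.card_congr ⟨fun k => ⟨⟨(1, k.1), k.2⟩, rfl⟩,
      fun x => ⟨((x.1 : H × K)).2, ?_⟩, fun k => rfl, fun x => ?_⟩
    · have hx := x.1.2
      rwa [show ((x.1 : H × K)) = ((1 : H), ((x.1 : H × K)).2) from Prod.ext x.2 rfl] at hx
    · exact Subtype.ext (Subtype.ext (Prod.ext x.2.symm rfl))
  have h2 : Nat.card {h : H // ∃ k : K, (h, k) ∈ U} = Nat.card f.range := by
    refine Nat.card_congr (Equiv.subtypeEquivRight fun h => ?_)
    constructor
    · rintro ⟨k, hk⟩; exact ⟨⟨(h, k), hk⟩, rfl⟩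
    · rintro ⟨⟨⟨h', k⟩, hm⟩, rfl⟩; exact ⟨k, hm⟩
  rw [h1, h2, ← Nat.card_congr (QuotientGroup.quotientKerEquivRange f).toEquiv, mul_comm]
  exact (Subgroup.card_eq_card_quotient_mul_card_subgroup f.ker).symm

/-- For finite groups and multiplicative relations `R ≤ G × H`, `T ≤ H × K`:
`|ker T ∩ indef R| · |indef TR| = |indef T| · |indef R ∩ dom T|`. -/
theorem stmt8 {G H K : Type*} [Group G] [Group H] [Group K]
    [Fintype G] [Fintype H] [Fintype K]
    (R : Subgroup (G × H)) (T : Subgroup (H × K)) :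
    Nat.card {h : H // (h, (1 : K)) ∈ T ∧ ((1 : G), h) ∈ R} *
      Nat.card {k : K // ∃ h : H, ((1 : G), h) ∈ R ∧ (h, k) ∈ T} =
    Nat.card {k : K // ((1 : H), k) ∈ T} *
      Nat.card {h : H // ((1 : G), h) ∈ R ∧ ∃ k : K, (h, k) ∈ T} := by
  let U : Subgroup (H × K) :=
    { carrier := {p | ((1 : G), p.1) ∈ R ∧ p ∈ T}
      one_mem' := ⟨R.one_mem, T.one_mem⟩
      mul_mem' := fun {a b} ha hb => by
        refine ⟨?_, T.mul_mem ha.2 hb.2⟩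
        have := R.mul_mem ha.1 hb.1
        simpa using this
      inv_mem' := fun {a} ha => by
        refine ⟨?_, T.inv_mem ha.2⟩
        have := R.inv_mem ha.1
        simpa using this }
  have e1 : Nat.card {h : H // (h, (1 : K)) ∈ T ∧ ((1 : G), h) ∈ R} =
      Nat.card {h : H // (h, (1 : K)) ∈ U} := by
    refine Nat.card_congr (Equiv.subtypeEquivRight fun h => ?_)
    simp only [U, Subgroup.mem_mk, Submonoid.mem_mk, Subsemigroup.mem_mk, Set.mem_setOf_eq]
    tauto
  have e2 : Nat.card {k : K // ∃ h : H, ((1 : G), h) ∈ R ∧ (h, k) ∈ T} =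
      Nat.card {k : K // ∃ h : H, (h, k) ∈ U} := by
    refine Nat.card_congr (Equiv.subtypeEquivRight fun k => ?_)
    simp only [U, Subgroup.mem_mk, Submonoid.mem_mk, Subsemigroup.mem_mk, Set.mem_setOf_eq]
  have e3 : Nat.card {k : K // ((1 : H), k) ∈ T} =
      Nat.card {k : K // ((1 : H), k) ∈ U} := by
    refine Nat.card_congr (Equiv.subtypeEquivRight fun k => ?_)
    simp only [U, Subgroup.mem_mk, Set.mem_setOf_eq]
    exact ⟨fun ht => ⟨R.one_mem, ht⟩, fun h => h.2⟩
  have e4 : Nat.card {h : H // ((1 : G), h) ∈ R ∧ ∃ k : K, (h, k) ∈ T} =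
      Nat.card {h : H // ∃ k : K, (h, k) ∈ U} := by
    refine Nat.card_congr (Equiv.subtypeEquivRight fun h => ?_)
    simp only [U, Subgroup.mem_mk, Submonoid.mem_mk, Subsemigroup.mem_mk, Set.mem_setOf_eq]
    tauto
  rw [e1, e2, e3, e4, aux_snd U, aux_fst U]
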